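/- arXiv:2102.12715 — 2 statements merged into one kernel-verified Lean document; each statement's English description precedes it below -/
import Mathlib

section
/- Let $P \in \mathbb{S}_+^n$, $\lambda > 0$ with $\lambda I - \Xi^\top P \Xi \succ 0$, and set $\Phi := B R^{-1} B^\top - \frac{1}{\lambda}\Xi\Xi^\top$ where $R \in \mathbb{S}_{++}^m$. Then the matrix $I + P\Phi$ is invertible. -/
open Matrix

private lemma conjT_eq_transpose {a b : ℕ} (M : Matrix (Fin a) (Fin b) ℝ) : Mᴴ = Mᵀ := by
  ext i j; simp [conjTranspose_apply]

private lemma dot_aux {a b : ℕ} (N : Matrix (Fin a) (Fin b) ℝ) (y : Fin a → ℝ) :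
    y ⬝ᵥ ((N * Nᵀ) *ᵥ y) = (Nᵀ *ᵥ y) ⬝ᵥ (Nᵀ *ᵥ y) := by
  rw [← mulVec_mulVec, dotProduct_mulVec, ← mulVec_transpose]

private lemma key {n k : ℕ} (M : Matrix (Fin n) (Fin k) ℝ) {lam : ℝ} (hlam : 0 < lam)
    (h : (lam • (1 : Matrix (Fin k) (Fin k) ℝ) - Mᵀ * M).PosDef) :
    ((1 : Matrix (Fin n) (Fin n) ℝ) - lam⁻¹ • (M * Mᵀ)).PosDef := by
  refine PosDef.of_dotProduct_mulVec_pos ?_ ?_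
  · have h1 := isHermitian_mul_conjTranspose_self M
    rw [conjT_eq_transpose] at h1
    have h2 : (lam⁻¹ • (M * Mᵀ)).IsHermitian := by
      unfold Matrix.IsHermitian at h1 ⊢
      rw [conjTranspose_smul, h1]
      simp
    exact isHermitian_one.sub h2
  · intro x hx
    have hxx : 0 < x ⬝ᵥ x := by
      have := dotProduct_star_self_pos_iff (R := ℝ) (n := Fin n) (v := x)
      simp only [star_trivial] at this
      exact this.mpr hx
    have hcalc : star x ⬝ᵥ (((1 : Matrix (Fin n) (Fin n) ℝ) - lam⁻¹ • (M * Mᵀ)) *ᵥ x)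
        = x ⬝ᵥ x - lam⁻¹ * ((Mᵀ *ᵥ x) ⬝ᵥ (Mᵀ *ᵥ x)) := by
      rw [star_trivial, sub_mulVec, dotProduct_sub, one_mulVec, smul_mulVec,
        dotProduct_smul, dot_aux, smul_eq_mul]
    rw [hcalc]
    by_cases hv0 : Mᵀ *ᵥ x = 0
    · simp [hv0, hxx]
    · set v := Mᵀ *ᵥ x with hv
      have h2 := h.dotProduct_mulVec_pos hv0
      have hcalc2 : star v ⬝ᵥ ((lam • (1 : Matrix (Fin k) (Fin k) ℝ) - Mᵀ * M) *ᵥ v)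
          = lam * (v ⬝ᵥ v) - (M *ᵥ v) ⬝ᵥ (M *ᵥ v) := by
        have := dot_aux Mᵀ v
        rw [transpose_transpose] at this
        rw [star_trivial, sub_mulVec, dotProduct_sub, smul_mulVec, one_mulVec,
          dotProduct_smul, this, smul_eq_mul]
      rw [hcalc2] at h2
      have hvv : 0 < v ⬝ᵥ v := by
        have := dotProduct_star_self_pos_iff (R := ℝ) (n := Fin k) (v := v)
        simp only [star_trivial] at this
        exact this.mpr hv0
      have hcs : (x ⬝ᵥ (M *ᵥ v)) ^ 2 ≤ (x ⬝ᵥ x) * ((M *ᵥ v) ⬝ᵥ (M *ᵥ v)) := by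
        have := Finset.sum_mul_sq_le_sq_mul_sq Finset.univ x (M *ᵥ v)
        simpa [dotProduct, pow_two] using this
      have hvvx : v ⬝ᵥ v = x ⬝ᵥ (M *ᵥ v) := by
        rw [hv, mulVec_mulVec, dot_aux]
      rw [hvvx] at hvv
      rw [sub_pos, inv_mul_lt_iff₀ hlam]
      nlinarith [hcs, h2, hvv, hxx]

theorem stmt2 {n m k : ℕ} (P : Matrix (Fin n) (Fin n) ℝ) (R : Matrix (Fin m) (Fin m) ℝ)
    (B : Matrix (Fin n) (Fin m) ℝ) (Ξ : Matrix (Fin n) (Fin k) ℝ) (lam : ℝ)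
    (hP : P.PosSemidef) (hR : R.PosDef) (hlam : 0 < lam)
    (hpd : (lam • (1 : Matrix (Fin k) (Fin k) ℝ) - Ξᵀ * P * Ξ).PosDef) :
    IsUnit (1 + P * (B * R⁻¹ * Bᵀ - lam⁻¹ • (Ξ * Ξᵀ))) := by
  obtain ⟨A, hA⟩ : ∃ A : Matrix (Fin n) (Fin n) ℝ, P = Aᴴ * A := by
    open scoped MatrixOrder in
    obtain ⟨A, hA⟩ := CStarAlgebra.nonneg_iff_eq_star_mul_self.mp hP.nonneg
    exact ⟨A, by rw [hA, star_eq_conjTranspose]⟩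
  rw [conjT_eq_transpose] at hA
  set Φ := B * R⁻¹ * Bᵀ - lam⁻¹ • (Ξ * Ξᵀ) with hΦ
  rw [Matrix.isUnit_iff_isUnit_det]
  have hdet : (1 + P * Φ).det = (1 + A * Φ * Aᵀ).det := by
    rw [hA, Matrix.mul_assoc, ← Matrix.det_one_add_mul_comm, Matrix.mul_assoc]
  rw [hdet]
  have e1 : (1 : Matrix (Fin n) (Fin n) ℝ) + A * Φ * Aᵀ
      = ((1 : Matrix (Fin n) (Fin n) ℝ) - lam⁻¹ • ((A * Ξ) * (A * Ξ)ᵀ)) + (A * B) * R⁻¹ * (A * B)ᵀ := by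
    rw [hΦ]
    simp only [transpose_mul, Matrix.mul_sub, Matrix.sub_mul, Matrix.mul_smul, Matrix.smul_mul,
      Matrix.mul_assoc]
    abel
  have hpd' : (lam • (1 : Matrix (Fin k) (Fin k) ℝ) - (A * Ξ)ᵀ * (A * Ξ)).PosDef := by
    have h3 : (A * Ξ)ᵀ * (A * Ξ) = Ξᵀ * P * Ξ := by
      rw [hA, transpose_mul]
      simp [Matrix.mul_assoc]
    rwa [h3]
  have posdef1 := key (A * Ξ) hlam hpd'
  have psd2 : ((A * B) * R⁻¹ * (A * B)ᵀ).PosSemidef := by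
    have := (hR.inv.posSemidef).mul_mul_conjTranspose_same (A * B)
    rwa [conjT_eq_transpose] at this
  have final := posdef1.add_posSemidef psd2
  rw [e1]
  exact final.det_pos.ne'.isUnit
end

section
/- Let $P$ be a solution of the algebraic Riccati equation $P - Q = A^\top P (I + \Phi P)^{-1} A$ where $I + \Phi P$ is invertible, and let $E := (I + \Phi P)^{-1} A$ have Jordan decomposition $E = U_1 D U_1^{-1}$ with $U_1$ invertible. Then with $U_2 := P U_1$, the columns of $\begin{bmatrix} U_1 \\ U_2 \end{bmatrix}$ satisfy $F \begin{bmatrix} U_1 \\ U_2 \end{bmatrix} = G \begin{bmatrix} U_1 \\ U_2 \end{bmatrix} D$, where $F = \begin{bmatrix} A & 0 \\ -Q & I \end{bmatrix}$ and $G = \begin{bmatrix} I & \Phi \\ 0 & A^\top \end{bmatrix}$. In particular $P = U_2 U_1^{-1}$. -/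
open Matrix

theorem stmt6 {n : ℕ} (A Q Φ P : Matrix (Fin n) (Fin n) ℝ)
    (hQ : Q.IsHermitian) (hΦ : Φ.IsHermitian)
    (U1 D : Matrix (Fin n) (Fin n) ℂ)
    (hinv : IsUnit ((1 : Matrix (Fin n) (Fin n) ℝ) + Φ * P))
    (hare : P - Q = Aᵀ * P * (1 + Φ * P)⁻¹ * A)
    (hU1 : IsUnit U1)
    (hE : (((1 + Φ * P)⁻¹ * A).map Complex.ofReal) = U1 * D * U1⁻¹) :
    Matrix.fromBlocks (A.map Complex.ofReal) 0 (-(Q.map Complex.ofReal)) 1 *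
        Matrix.fromRows U1 (P.map Complex.ofReal * U1) =
      Matrix.fromBlocks 1 (Φ.map Complex.ofReal) 0 ((A.map Complex.ofReal)ᵀ) *
        (Matrix.fromRows U1 (P.map Complex.ofReal * U1) * D) ∧
    P.map Complex.ofReal = (P.map Complex.ofReal * U1) * U1⁻¹ := by
  -- notation for mapping to ℂ
  have hmap : ∀ X Y : Matrix (Fin n) (Fin n) ℝ,
      (X * Y).map Complex.ofReal = X.map Complex.ofReal * Y.map Complex.ofReal := by
    intro X Y
    exact Matrix.map_mul (f := Complex.ofRealHom)
  have hU1det : IsUnit U1.det := (Matrix.isUnit_iff_isUnit_det U1).mp hU1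
  have hU1inv : U1⁻¹ * U1 = 1 := Matrix.nonsing_inv_mul U1 hU1det
  have hU1inv' : U1 * U1⁻¹ = 1 := Matrix.mul_nonsing_inv U1 hU1det
  -- E' * U1 = U1 * D
  have hEU1 : (((1 + Φ * P)⁻¹ * A).map Complex.ofReal) * U1 = U1 * D := by
    rw [hE, mul_assoc, hU1inv, mul_one]
  -- (1+ΦP) * (1+ΦP)⁻¹ = 1 over ℝ
  have hS : (1 + Φ * P) * (1 + Φ * P)⁻¹ = 1 :=
    Matrix.mul_nonsing_inv _ ((Matrix.isUnit_iff_isUnit_det _).mp hinv)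
  -- A' * U1 = (1+ΦP)' * U1 * D
  have h1 : A.map Complex.ofReal * U1 =
      ((1 : Matrix (Fin n) (Fin n) ℝ) + Φ * P).map Complex.ofReal * (U1 * D) := by
    have : A = (1 + Φ * P) * ((1 + Φ * P)⁻¹ * A) := by
      rw [← mul_assoc, hS, one_mul]
    calc A.map Complex.ofReal * U1
        = ((1 + Φ * P) * ((1 + Φ * P)⁻¹ * A)).map Complex.ofReal * U1 := by rw [← this]
      _ = ((1 : Matrix (Fin n) (Fin n) ℝ) + Φ * P).map Complex.ofReal *
            ((((1 + Φ * P)⁻¹ * A).map Complex.ofReal) * U1) := by rw [hmap, mul_assoc]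
      _ = _ := by rw [hEU1]
  have h1' : ((1 : Matrix (Fin n) (Fin n) ℝ) + Φ * P).map Complex.ofReal
      = 1 + Φ.map Complex.ofReal * P.map Complex.ofReal := by
    rw [Matrix.map_add Complex.ofReal Complex.ofReal_add, ← hmap,
      Matrix.map_one _ Complex.ofReal_zero Complex.ofReal_one]
  -- second block equation
  have h2 : (P - Q).map Complex.ofReal * U1 =
      (A.map Complex.ofReal)ᵀ * (P.map Complex.ofReal * (U1 * D)) := by
    have hare' : P - Q = Aᵀ * (P * ((1 + Φ * P)⁻¹ * A)) := by
      rw [hare, mul_assoc, mul_assoc]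
    calc (P - Q).map Complex.ofReal * U1
        = (Aᵀ * (P * ((1 + Φ * P)⁻¹ * A))).map Complex.ofReal * U1 := by rw [← hare']
      _ = (Aᵀ.map Complex.ofReal) * (P.map Complex.ofReal *
            ((((1 + Φ * P)⁻¹ * A).map Complex.ofReal) * U1)) := by
          rw [hmap, hmap, mul_assoc, mul_assoc]
      _ = _ := by rw [hEU1, Matrix.transpose_map]
  constructor
  · change @HMul.hMul _ _ _ Matrix.instHMulOfFintypeOfMulOfAddCommMonoid
        (Matrix.fromBlocks (A.map Complex.ofReal) 0 (-(Q.map Complex.ofReal)) 1)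
        (Matrix.fromRows U1 (P.map Complex.ofReal * U1)) =
      @HMul.hMul _ _ _ Matrix.instHMulOfFintypeOfMulOfAddCommMonoid
        (Matrix.fromBlocks 1 (Φ.map Complex.ofReal) 0 ((A.map Complex.ofReal)ᵀ))
        (Matrix.fromRows U1 (P.map Complex.ofReal * U1) * D)
    rw [Matrix.fromRows_mul, Matrix.fromBlocks_mul_fromRows, Matrix.fromBlocks_mul_fromRows]
    simp only [zero_mul, add_zero, one_mul, zero_add]
    have hX : A.map Complex.ofReal * U1
        = U1 * D + Φ.map Complex.ofReal * (P.map Complex.ofReal * U1 * D) := by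
      rw [h1, h1', add_mul, one_mul, mul_assoc, mul_assoc]
    have hY : -(Q.map Complex.ofReal) * U1 + P.map Complex.ofReal * U1
        = (A.map Complex.ofReal)ᵀ * (P.map Complex.ofReal * U1 * D) := by
      have hsub : -(Q.map Complex.ofReal) * U1 + P.map Complex.ofReal * U1
          = (P - Q).map Complex.ofReal * U1 := by
        rw [Matrix.map_sub Complex.ofReal Complex.ofReal_sub, Matrix.sub_mul, neg_mul]
        abel
      rw [hsub, h2, mul_assoc]
    rw [hX, hY]
  · rw [mul_assoc, hU1inv', mul_one]
end
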